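/- Let V = V₁ × V₂ with A a symmetric positive definite bilinear form, Z the elimination operator, and a₁ the Schur-complement form. A pair (λ, (u₁, u₂)) with λ > 0 and (u₁,u₂) ≠ 0 satisfies A((u₁,u₂),(w₁,w₂)) = λ ⟨u₁, w₁⟩ for all (w₁,w₂) ∈ V (where ⟨·,·⟩ is an inner product on V₁) if and only if u₂ = Z u₁ and a₁(u₁, w₁) = λ ⟨u₁, w₁⟩ for all w₁ ∈ V₁. -/
import Mathlib


open scoped RealInnerProductSpace

theorem stmt8 {V₁ V₂ : Type*} [NormedAddCommGroup V₁] [InnerProductSpace ℝ V₁]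
    [AddCommGroup V₂] [Module ℝ V₂]
    [FiniteDimensional ℝ V₁] [FiniteDimensional ℝ V₂]
    (A : (V₁ × V₂) →ₗ[ℝ] (V₁ × V₂) →ₗ[ℝ] ℝ)
    (hsym : ∀ v w, A v w = A w v)
    (hpos : ∀ v : V₁ × V₂, v ≠ 0 → 0 < A v v)
    (Z : V₁ →ₗ[ℝ] V₂)
    (hZ : ∀ (v₁ : V₁) (w₂ : V₂), A (v₁, Z v₁) (0, w₂) = 0)
    (lam : ℝ) (hlam : 0 < lam) (u₁ : V₁) (u₂ : V₂) (hne : (u₁, u₂) ≠ 0) :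
    (∀ (w₁ : V₁) (w₂ : V₂), A (u₁, u₂) (w₁, w₂) = lam * ⟪u₁, w₁⟫) ↔
      (u₂ = Z u₁ ∧ ∀ w₁ : V₁, A (u₁, Z u₁) (w₁, Z w₁) = lam * ⟪u₁, w₁⟫) := by
  constructor
  · intro h
    have hsplit : ((u₁, u₂) : V₁ × V₂) = (u₁, Z u₁) + (0, u₂ - Z u₁) := by
      simp [Prod.ext_iff]
    have hd : u₂ - Z u₁ = 0 := by
      by_contra hd
      have hne0 : ((0, u₂ - Z u₁) : V₁ × V₂) ≠ 0 := by
        simp [Prod.ext_iff, hd]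
      have hpos' := hpos _ hne0
      have h1 : ∀ w₂ : V₂, A (0, u₂ - Z u₁) (0, w₂) = 0 := by
        intro w₂
        have := h 0 w₂
        rw [hsplit] at this
        simp only [map_add, LinearMap.add_apply] at this
        rw [hZ u₁ w₂] at this
        simpa using this
      have := h1 (u₂ - Z u₁)
      linarith
    have hu₂ : u₂ = Z u₁ := by
      have := sub_eq_zero.mp hd; exact this
    refine ⟨hu₂, fun w₁ => ?_⟩
    rw [← hu₂]; exact h w₁ (Z w₁)
  · rintro ⟨hu₂, h⟩ w₁ w₂
    subst hu₂
    have hsplit : ((w₁, w₂) : V₁ × V₂) = (w₁, Z w₁) + (0, w₂ - Z w₁) := by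
      simp [Prod.ext_iff]
    rw [hsplit, map_add, h w₁, hZ u₁ (w₂ - Z w₁), add_zero]
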